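/- arXiv:1207.5467 — 2 statements merged into one kernel-verified Lean document; each statement's English description precedes it below -/
import Mathlib

section
/- Fix integers n ≥ 2, r ≥ n, 1 ≤ q ≤ n and 0 ≤ p ≤ r−n. Then Σ_I ( ∏_{α=1}^{q−1} (p+q−i_α)_+ · ∏_{α=q}^{n−1} (i_α−p−q)_+ ) = σ_{q−1}(p+q−1) · σ_{n−q}(r−p−q), where the sum on the left is over all (n−1)-element subsets I = {i_1 < … < i_{n−1}} of [r] = {1,…,r}. -/
open MeasureTheory Filter

noncomputable section

/-- `σ_b(a)`: sum over all `b`-element subsets `J` of `{1,…,a}` of the product of elements. -/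
def sigmaFn (b a : ℕ) : ℕ := ∑ J ∈ (Finset.Icc 1 a).powersetCard b, ∏ j ∈ J, j

/-- the `(α+1)`-st smallest element of a finite set of naturals (0-indexed). -/
def nthElt (I : Finset ℕ) (α : ℕ) : ℕ := (I.sort (· ≤ ·)).getD α 0

/-- the product `∏_{α=1}^{q−1} (p+q−i_α)_+ · ∏_{α=q}^{n−1} (i_α−p−q)_+`. -/
def pureNum (n p q : ℕ) (I : Finset ℕ) : ℤ :=
  ∏ α ∈ Finset.range (n - 1),
    if α + 1 < q then max ((p : ℤ) + q - nthElt I α) 0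
    else max ((nthElt I α : ℤ) - p - q) 0

/-- the entry `k_{p,q}(π(r,I))` of the pure diagram `π(r,I)`. -/
def kPure (n r p q : ℕ) (I : Finset ℕ) : ℝ :=
  ((r - n).factorial : ℝ) * (pureNum n p q I : ℝ) /
    (((p + q - 1).factorial : ℝ) * ((r - p - q).factorial : ℝ))

/-- `μ_{q,n}(r,p)`. -/
def muFn (n q r p : ℕ) : ℝ :=
  (1 / 2 ^ n) * ((p : ℝ) ^ (q - 1) * ((r : ℝ) - p - n) ^ (n - q)) /
    ((q - 1).factorial * (n - q).factorial)


lemma nthElt_eq_get (I : Finset ℕ) {j : ℕ} (hj : j < I.card) :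
    nthElt I j = (I.sort (· ≤ ·))[j]'(by rwa [Finset.length_sort]) := by
  rw [nthElt, List.getD_eq_getElem]

lemma nthElt_mem (I : Finset ℕ) {j : ℕ} (hj : j < I.card) : nthElt I j ∈ I := by
  rw [nthElt_eq_get I hj]
  exact (Finset.mem_sort (· ≤ ·)).1 (List.getElem_mem _)

lemma nthElt_mono (I : Finset ℕ) {i j : ℕ} (hij : i ≤ j) (hj : j < I.card) :
    nthElt I i ≤ nthElt I j := by
  rw [nthElt_eq_get I (lt_of_le_of_lt hij hj), nthElt_eq_get I hj]
  exact (I.pairwise_sort (· ≤ ·)).rel_get_of_le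
    (a := ⟨i, by rw [Finset.length_sort]; exact lt_of_le_of_lt hij hj⟩)
    (b := ⟨j, by rwa [Finset.length_sort]⟩) hij

lemma nthElt_strict (I : Finset ℕ) {i j : ℕ} (hij : i < j) (hj : j < I.card) :
    nthElt I i < nthElt I j := by
  rw [nthElt_eq_get I (lt_trans hij hj), nthElt_eq_get I hj]
  exact (I.sortedLT_sort.pairwise).rel_get_of_lt
    (a := ⟨i, by rw [Finset.length_sort]; exact lt_trans hij hj⟩)
    (b := ⟨j, by rwa [Finset.length_sort]⟩) hij

lemma nthElt_indexOf (I : Finset ℕ) {x : ℕ} (hx : x ∈ I) :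
    nthElt I ((I.sort (· ≤ ·)).idxOf x) = x ∧ (I.sort (· ≤ ·)).idxOf x < I.card := by
  have hxL : x ∈ I.sort (· ≤ ·) := (Finset.mem_sort _).2 hx
  have hidx : (I.sort (· ≤ ·)).idxOf x < (I.sort (· ≤ ·)).length :=
    List.idxOf_lt_length_iff.2 hxL
  have hlen : (I.sort (· ≤ ·)).length = I.card := Finset.length_sort _
  refine ⟨?_, by rwa [hlen] at hidx⟩
  rw [nthElt_eq_get I (by rwa [hlen] at hidx)]
  exact List.getElem_idxOf hidx

lemma nthElt_le_iff (I : Finset ℕ) (v : ℕ) {j : ℕ} (hj : j < I.card) :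
    nthElt I j ≤ v ↔ j < (I.filter (· ≤ v)).card := by
  constructor
  · intro h
    have : (Finset.range (j+1)).card ≤ (I.filter (· ≤ v)).card := by
      apply Finset.card_le_card_of_injOn (nthElt I)
      · intro i hi
        simp only [Finset.coe_range, Set.mem_Iio, Nat.lt_succ_iff] at hi
        refine Finset.mem_filter.2 ⟨nthElt_mem I (lt_of_le_of_lt hi hj), ?_⟩
        simpa using le_trans (nthElt_mono I hi hj) h
      · intro a ha b hb hab
        simp only [Finset.coe_range, Set.mem_Iio, Nat.lt_succ_iff] at ha hb
        by_contra hne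
        rcases Nat.lt_or_ge a b with h' | h'
        · exact absurd hab (ne_of_lt (nthElt_strict I h' (lt_of_le_of_lt hb hj)))
        · have : b < a := lt_of_le_of_ne h' (Ne.symm hne)
          exact absurd hab.symm (ne_of_lt (nthElt_strict I this (lt_of_le_of_lt ha hj)))
    simpa [Nat.succ_le_iff] using this
  · intro h
    by_contra hv
    push_neg at hv
    have hle : (I.filter (· ≤ v)).card ≤ (Finset.range j).card := by
      apply Finset.card_le_card_of_injOn (fun x => (I.sort (· ≤ ·)).idxOf x)
      · intro x hx
        obtain ⟨hxI, hxv⟩ := Finset.mem_filter.1 hx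
        obtain ⟨h2, hlt⟩ := nthElt_indexOf I hxI
        simp only [Finset.coe_range, Set.mem_Iio]
        by_contra hge
        push_neg at hge
        have := nthElt_mono I hge hlt
        rw [h2] at this
        omega
      · intro a ha b hb hab
        have haL : a ∈ I.sort (· ≤ ·) := (Finset.mem_sort _).2 (Finset.mem_filter.1 ha).1
        have hbL : b ∈ I.sort (· ≤ ·) := (Finset.mem_sort _).2 (Finset.mem_filter.1 hb).1
        exact List.idxOf_inj haL |>.1 hab
    rw [Finset.card_range] at hle
    omega

lemma prod_nthElt {M : Type*} [CommMonoid M] (I : Finset ℕ) (g : ℕ → M) :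
    ∏ α ∈ Finset.range I.card, g (nthElt I α) = ∏ i ∈ I, g i := by
  apply Finset.prod_bij (i := fun α _ => nthElt I α)
  · intro α hα; exact nthElt_mem I (Finset.mem_range.1 hα)
  · intro a ha b hb hab
    by_contra hne
    rcases Nat.lt_or_ge a b with h' | h'
    · exact absurd hab (ne_of_lt (nthElt_strict I h' (Finset.mem_range.1 hb)))
    · have : b < a := lt_of_le_of_ne h' (Ne.symm hne)
      exact absurd hab.symm (ne_of_lt (nthElt_strict I this (Finset.mem_range.1 ha)))
  · intro x hx
    obtain ⟨h2, hlt⟩ := nthElt_indexOf I hx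
    exact ⟨_, Finset.mem_range.2 hlt, h2⟩
  · intro _ _; rfl

section main
variable {n r p q : ℕ}

lemma vanish (hn : 2 ≤ n) (hq1 : 1 ≤ q) (hqn : q ≤ n)
    (I : Finset ℕ) (hcard : I.card = n - 1)
    (hbad : ¬((I.filter (· ≤ p + q - 1)).card = q - 1 ∧ p + q ∉ I)) :
    pureNum n p q I = 0 := by
  rw [pureNum]
  by_cases hm : p + q ∈ I
  · -- the element p+q gives a zero factor
    obtain ⟨h2, hlt⟩ := nthElt_indexOf I hm
    apply Finset.prod_eq_zero (i := (I.sort (· ≤ ·)).idxOf (p + q))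
      (Finset.mem_range.2 (by omega))
    rw [h2]
    split_ifs <;> push_cast <;> simp
  · push_neg at hbad
    set fc' := (I.filter (· ≤ p + q - 1)).card with hfcdef
    have hfc : fc' ≠ q - 1 := fun h => hm (hbad h)
    have hfcle : fc' ≤ n - 1 := hcard ▸ Finset.card_filter_le I _
    rcases Nat.lt_or_ge fc' (q - 1) with hlt | hge
    · -- too few small elements: factor at index q-2 vanishes; q ≥ 2 here
      have hq2 : 2 ≤ q := by omega
      have hidx : q - 2 < n - 1 := by omega
      have hidx' : q - 2 < I.card := by omega
      have hbig : ¬ nthElt I (q - 2) ≤ p + q - 1 := by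
        rw [nthElt_le_iff I _ hidx']; omega
      apply Finset.prod_eq_zero (i := q - 2) (Finset.mem_range.2 hidx)
      have : q - 2 + 1 < q := by omega
      rw [if_pos this]
      have : (p : ℤ) + q - nthElt I (q - 2) ≤ 0 := by
        have : p + q ≤ nthElt I (q - 2) := by omega
        have := (Nat.cast_le (α := ℤ)).2 this
        push_cast at this ⊢; omega
      simp [max_eq_right this]
    · -- too many small elements: factor at index q-1 vanishes
      have hgt : q - 1 < fc' := by omega
      have hidx' : q - 1 < I.card := by omega
      have hsm : nthElt I (q - 1) ≤ p + q - 1 := (nthElt_le_iff I _ hidx').2 hgt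
      apply Finset.prod_eq_zero (i := q - 1) (Finset.mem_range.2 (by omega))
      rw [if_neg (by omega)]
      have : (nthElt I (q - 1) : ℤ) - p - q ≤ 0 := by
        have : nthElt I (q - 1) ≤ p + q := by omega
        have := (Nat.cast_le (α := ℤ)).2 this
        push_cast at this ⊢; omega
      simp [max_eq_right this]

lemma value (hn : 2 ≤ n) (hq1 : 1 ≤ q) (hqn : q ≤ n)
    (I : Finset ℕ) (hcard : I.card = n - 1)
    (hfc : (I.filter (· ≤ p + q - 1)).card = q - 1) (hm : p + q ∉ I) :
    pureNum n p q I =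
      (∏ a ∈ I.filter (· ≤ p + q - 1), ((p : ℤ) + q - a)) *
      (∏ b ∈ I.filter (fun b => ¬ b ≤ p + q - 1), ((b : ℤ) - p - q)) := by
  have key : pureNum n p q I = ∏ i ∈ I,
      (if i ≤ p + q - 1 then (p : ℤ) + q - i else (i : ℤ) - p - q) := by
    rw [← prod_nthElt I, pureNum, hcard]
    apply Finset.prod_congr rfl
    intro α hα
    have hα' : α < I.card := by have := Finset.mem_range.1 hα; omega
    by_cases hsm : α + 1 < q
    · have h1 : nthElt I α ≤ p + q - 1 := by
        rw [nthElt_le_iff I _ hα', hfc]; omega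
      rw [if_pos hsm, if_pos h1]
      have : nthElt I α < p + q := by omega
      have := (Nat.cast_lt (α := ℤ)).2 this
      push_cast at this
      rw [max_eq_left (by omega)]
    · have h1 : ¬ nthElt I α ≤ p + q - 1 := by
        rw [nthElt_le_iff I _ hα', hfc]; omega
      rw [if_neg hsm, if_neg h1]
      have hne : nthElt I α ≠ p + q := fun h => hm (h ▸ nthElt_mem I hα')
      have : p + q < nthElt I α := by omega
      have := (Nat.cast_lt (α := ℤ)).2 this
      push_cast at this
      rw [max_eq_left (by omega)]
  rw [key, ← Finset.prod_filter_mul_prod_filter_not I (· ≤ p + q - 1)]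
  congr 1
  · exact Finset.prod_congr rfl fun a ha => if_pos (Finset.mem_filter.1 ha).2
  · exact Finset.prod_congr rfl fun b hb => if_neg (Finset.mem_filter.1 hb).2

end main

lemma factor_low (m k : ℕ) (hm : 1 ≤ m) :
    ∑ A ∈ (Finset.Icc 1 (m-1)).powersetCard k, ∏ a ∈ A, ((m : ℤ) - a)
      = (sigmaFn k (m-1) : ℤ) := by
  rw [sigmaFn]
  push_cast
  apply Finset.sum_nbij' (i := fun A => A.image (fun a => m - a))
    (j := fun A => A.image (fun a => m - a))
  · intro A hA
    obtain ⟨hsub, hcard⟩ := Finset.mem_powersetCard.1 hA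
    refine Finset.mem_powersetCard.2 ⟨?_, ?_⟩
    · intro x hx
      obtain ⟨a, ha, rfl⟩ := Finset.mem_image.1 hx
      have := Finset.mem_Icc.1 (hsub ha)
      exact Finset.mem_Icc.2 (by omega)
    · rw [Finset.card_image_of_injOn, hcard]
      intro a ha b hb hab
      have h1 := Finset.mem_Icc.1 (hsub ha)
      have h2 := Finset.mem_Icc.1 (hsub hb)
      simp only at hab
      omega
  · intro A hA
    obtain ⟨hsub, hcard⟩ := Finset.mem_powersetCard.1 hA
    refine Finset.mem_powersetCard.2 ⟨?_, ?_⟩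
    · intro x hx
      obtain ⟨a, ha, rfl⟩ := Finset.mem_image.1 hx
      have := Finset.mem_Icc.1 (hsub ha)
      exact Finset.mem_Icc.2 (by omega)
    · rw [Finset.card_image_of_injOn, hcard]
      intro a ha b hb hab
      have h1 := Finset.mem_Icc.1 (hsub ha)
      have h2 := Finset.mem_Icc.1 (hsub hb)
      simp only at hab
      omega
  · intro A hA
    obtain ⟨hsub, _⟩ := Finset.mem_powersetCard.1 hA
    rw [Finset.image_image]
    rw [show Finset.image ((fun a => m - a) ∘ fun a => m - a) A = Finset.image id A from
      Finset.image_congr fun a ha => by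
        have := Finset.mem_Icc.1 (hsub ha); simp; omega]
    exact Finset.image_id
  · intro A hA
    obtain ⟨hsub, _⟩ := Finset.mem_powersetCard.1 hA
    rw [Finset.image_image]
    rw [show Finset.image ((fun a => m - a) ∘ fun a => m - a) A = Finset.image id A from
      Finset.image_congr fun a ha => by
        have := Finset.mem_Icc.1 (hsub ha); simp; omega]
    exact Finset.image_id
  · intro A hA
    obtain ⟨hsub, _⟩ := Finset.mem_powersetCard.1 hA
    rw [Finset.prod_image (by
      intro a ha b hb hab
      have h1 := Finset.mem_Icc.1 (hsub ha)
      have h2 := Finset.mem_Icc.1 (hsub hb)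
      simp only at hab
      omega)]
    apply Finset.prod_congr rfl
    intro a ha
    have := Finset.mem_Icc.1 (hsub ha)
    have : a ≤ m := by omega
    push_cast [Nat.cast_sub this]
    ring

lemma factor_high (m r k : ℕ) (hmr : m ≤ r) :
    ∑ B ∈ (Finset.Icc (m+1) r).powersetCard k, ∏ b ∈ B, ((b : ℤ) - m)
      = (sigmaFn k (r-m) : ℤ) := by
  rw [sigmaFn]
  push_cast
  apply Finset.sum_nbij' (i := fun B => B.image (fun b => b - m))
    (j := fun J => J.image (fun j => j + m))
  · intro B hB
    obtain ⟨hsub, hcard⟩ := Finset.mem_powersetCard.1 hB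
    refine Finset.mem_powersetCard.2 ⟨?_, ?_⟩
    · intro x hx
      obtain ⟨b, hb, rfl⟩ := Finset.mem_image.1 hx
      have := Finset.mem_Icc.1 (hsub hb)
      exact Finset.mem_Icc.2 (by omega)
    · rw [Finset.card_image_of_injOn, hcard]
      intro a ha b hb hab
      have h1 := Finset.mem_Icc.1 (hsub ha)
      have h2 := Finset.mem_Icc.1 (hsub hb)
      simp only at hab
      omega
  · intro J hJ
    obtain ⟨hsub, hcard⟩ := Finset.mem_powersetCard.1 hJ
    refine Finset.mem_powersetCard.2 ⟨?_, ?_⟩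
    · intro x hx
      obtain ⟨j, hj, rfl⟩ := Finset.mem_image.1 hx
      have := Finset.mem_Icc.1 (hsub hj)
      exact Finset.mem_Icc.2 (by omega)
    · rw [Finset.card_image_of_injective _ (add_left_injective m), hcard]
  · intro B hB
    obtain ⟨hsub, _⟩ := Finset.mem_powersetCard.1 hB
    rw [Finset.image_image]
    rw [show Finset.image ((fun j => j + m) ∘ fun b => b - m) B = Finset.image id B from
      Finset.image_congr fun b hb => by
        have := Finset.mem_Icc.1 (hsub hb); simp; omega]
    exact Finset.image_id
  · intro J hJ
    rw [Finset.image_image]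
    rw [show Finset.image ((fun b => b - m) ∘ fun j => j + m) J = Finset.image id J from
      Finset.image_congr fun j hj => by simp]
    exact Finset.image_id
  · intro B hB
    obtain ⟨hsub, _⟩ := Finset.mem_powersetCard.1 hB
    rw [Finset.prod_image (by
      intro a ha b hb hab
      have h1 := Finset.mem_Icc.1 (hsub ha)
      have h2 := Finset.mem_Icc.1 (hsub hb)
      simp only at hab
      omega)]
    apply Finset.prod_congr rfl
    intro b hb
    have := Finset.mem_Icc.1 (hsub hb)
    have : m ≤ b := by omega
    push_cast [Nat.cast_sub this]
    ring

theorem stmt2 (n r p q : ℕ) (hn : 2 ≤ n) (hr : n ≤ r) (hq1 : 1 ≤ q) (hqn : q ≤ n)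
    (hp : p ≤ r - n) :
    ∑ I ∈ (Finset.Icc 1 r).powersetCard (n - 1), pureNum n p q I =
      (sigmaFn (q - 1) (p + q - 1) : ℤ) * (sigmaFn (n - q) (r - p - q) : ℤ) := by
  have hmr : p + q ≤ r := by omega
  have hm1 : 1 ≤ p + q := by omega
  have hstep1 : ∑ I ∈ (Finset.Icc 1 r).powersetCard (n - 1), pureNum n p q I =
      ∑ I ∈ ((Finset.Icc 1 r).powersetCard (n - 1)).filter
        (fun I => (I.filter (· ≤ p + q - 1)).card = q - 1 ∧ p + q ∉ I), pureNum n p q I := by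
    refine (Finset.sum_filter_of_ne fun I hI hne => ?_).symm
    by_contra hbad
    exact hne (vanish hn hq1 hqn I (Finset.mem_powersetCard.1 hI).2 hbad)
  rw [hstep1]
  have hstep3 : ∑ I ∈ ((Finset.Icc 1 r).powersetCard (n - 1)).filter
        (fun I => (I.filter (· ≤ p + q - 1)).card = q - 1 ∧ p + q ∉ I), pureNum n p q I =
      ∑ P ∈ (Finset.Icc 1 (p + q - 1)).powersetCard (q - 1) ×ˢ
             (Finset.Icc (p + q + 1) r).powersetCard (n - q),
        (∏ a ∈ P.1, ((p : ℤ) + q - a)) * (∏ b ∈ P.2, ((b : ℤ) - p - q)) := by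
    apply Finset.sum_nbij'
      (i := fun I => (I.filter (· ≤ p + q - 1), I.filter (fun b => ¬ b ≤ p + q - 1)))
      (j := fun P => P.1 ∪ P.2)
    · intro I hI
      obtain ⟨hIS, hfc, hmI⟩ := Finset.mem_filter.1 hI
      obtain ⟨hsub, hcard⟩ := Finset.mem_powersetCard.1 hIS
      have hcards : (I.filter (· ≤ p + q - 1)).card
          + (I.filter (fun b => ¬ b ≤ p + q - 1)).card = I.card :=
        Finset.card_filter_add_card_filter_not _
      refine Finset.mem_product.2 ⟨Finset.mem_powersetCard.2 ⟨?_, hfc⟩,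
        Finset.mem_powersetCard.2 ⟨?_, ?_⟩⟩
      · intro x hx
        obtain ⟨hxI, hxv⟩ := Finset.mem_filter.1 hx
        have := Finset.mem_Icc.1 (hsub hxI)
        exact Finset.mem_Icc.2 (by omega)
      · intro x hx
        obtain ⟨hxI, hxv⟩ := Finset.mem_filter.1 hx
        have := Finset.mem_Icc.1 (hsub hxI)
        have hne : x ≠ p + q := fun h => hmI (h ▸ hxI)
        exact Finset.mem_Icc.2 (by omega)
      · dsimp only; omega
    · intro P hP
      obtain ⟨hA, hB⟩ := Finset.mem_product.1 hP
      obtain ⟨hAsub, hAcard⟩ := Finset.mem_powersetCard.1 hA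
      obtain ⟨hBsub, hBcard⟩ := Finset.mem_powersetCard.1 hB
      have hdisj : Disjoint P.1 P.2 := by
        rw [Finset.disjoint_left]
        intro x hxA hxB
        have h1 := Finset.mem_Icc.1 (hAsub hxA)
        have h2 := Finset.mem_Icc.1 (hBsub hxB)
        omega
      have hfilter : (P.1 ∪ P.2).filter (· ≤ p + q - 1) = P.1 := by
        ext x
        simp only [Finset.mem_filter, Finset.mem_union]
        constructor
        · rintro ⟨hx | hx, hxv⟩
          · exact hx
          · have := Finset.mem_Icc.1 (hBsub hx); omega
        · intro hx
          exact ⟨Or.inl hx, (Finset.mem_Icc.1 (hAsub hx)).2⟩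
      refine Finset.mem_filter.2 ⟨Finset.mem_powersetCard.2 ⟨?_, ?_⟩, ?_, ?_⟩
      · intro x hx
        rcases Finset.mem_union.1 hx with hx | hx
        · have := Finset.mem_Icc.1 (hAsub hx); exact Finset.mem_Icc.2 (by omega)
        · have := Finset.mem_Icc.1 (hBsub hx); exact Finset.mem_Icc.2 (by omega)
      · rw [Finset.card_union_of_disjoint hdisj]; omega
      · rw [hfilter]; exact hAcard
      · intro hx
        rcases Finset.mem_union.1 hx with hx | hx
        · have := Finset.mem_Icc.1 (hAsub hx); omega
        · have := Finset.mem_Icc.1 (hBsub hx); omega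
    · intro I hI
      exact Finset.filter_union_filter_not_eq _ I
    · intro P hP
      obtain ⟨hA, hB⟩ := Finset.mem_product.1 hP
      obtain ⟨hAsub, hAcard⟩ := Finset.mem_powersetCard.1 hA
      obtain ⟨hBsub, hBcard⟩ := Finset.mem_powersetCard.1 hB
      have e1 : (P.1 ∪ P.2).filter (· ≤ p + q - 1) = P.1 := by
        ext x
        simp only [Finset.mem_filter, Finset.mem_union]
        constructor
        · rintro ⟨hx | hx, hxv⟩
          · exact hx
          · have := Finset.mem_Icc.1 (hBsub hx); omega
        · intro hx
          exact ⟨Or.inl hx, (Finset.mem_Icc.1 (hAsub hx)).2⟩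
      have e2 : (P.1 ∪ P.2).filter (fun b => ¬ b ≤ p + q - 1) = P.2 := by
        ext x
        simp only [Finset.mem_filter, Finset.mem_union]
        constructor
        · rintro ⟨hx | hx, hxv⟩
          · have := Finset.mem_Icc.1 (hAsub hx); omega
          · exact hx
        · intro hx
          refine ⟨Or.inr hx, ?_⟩
          have := Finset.mem_Icc.1 (hBsub hx); omega
      rw [e1, e2]
    · intro I hI
      obtain ⟨hIS, hfc, hmI⟩ := Finset.mem_filter.1 hI
      obtain ⟨hsub, hcard⟩ := Finset.mem_powersetCard.1 hIS
      exact value hn hq1 hqn I hcard hfc hmI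
  rw [hstep3, Finset.sum_product]
  dsimp only
  rw [← Finset.sum_mul_sum, Nat.sub_sub,
    ← factor_low (p + q) (q - 1) hm1, ← factor_high (p + q) r (n - q) hmr]
  congr 1
  all_goals
    first
      | refine Finset.sum_congr rfl fun A _ => Finset.prod_congr rfl fun a _ => by push_cast; ring
      | rfl
end
end

section
/- Fix integers n ≥ 2 and 1 ≤ q ≤ n, and a real constant 0 < c < 1/2. Then for every ε > 0 there exists R such that for all integers r ≥ R and all integers p with c·r ≤ p ≤ (1−c)·r one has | ( (1/2) · Σ_I k_{p,q}(π(r,I)) ) / ( C(r−n,p) · μ_{q,n}(r,p) ) − 1 | < ε, where the sum is over all (n−1)-element subsets I of [r] = {1,…,r}. -/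
open MeasureTheory Filter

noncomputable section

open Finset

lemma list_prod_getD {M : Type*} [CommMonoid M] (g : ℕ → M) :
    ∀ (l : List ℕ), ∏ α ∈ Finset.range l.length, g (l.getD α 0) = (l.map g).prod := by
  intro l
  induction l with
  | nil => simp
  | cons a l ih =>
    rw [List.length_cons, Finset.prod_range_succ']
    simp only [List.getD_cons_succ, List.getD_cons_zero, List.map_cons, List.prod_cons, ih]
    exact mul_comm _ _

lemma prod_sort_map {M : Type*} [CommMonoid M] (s : Finset ℕ) (g : ℕ → M) :
    ((s.sort (· ≤ ·)).map g).prod = ∏ x ∈ s, g x := by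
  rw [← Finset.prod_map_toList]
  exact List.Perm.prod_eq (List.Perm.map g (Finset.sort_perm_toList s _))

lemma sorted_getD_mono {L : List ℕ} (hL : L.Pairwise (· < ·)) {i j : ℕ} (hij : i ≤ j)
    (hj : j < L.length) : L.getD i 0 ≤ L.getD j 0 := by
  rcases eq_or_lt_of_le hij with rfl | h
  · exact le_refl _
  · rw [List.getD_eq_getElem _ _ (lt_trans h hj), List.getD_eq_getElem _ _ hj]
    exact le_of_lt (List.pairwise_iff_getElem.mp hL i j _ hj h)

lemma sorted_getD_lt_iff {v : ℕ} : ∀ {L : List ℕ}, L.Pairwise (· < ·) → ∀ {α : ℕ}, α < L.length →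
    (L.getD α 0 < v ↔ α < (L.filter (fun x => x < v)).length) := by
  intro L
  induction L with
  | nil => intro _ α h; simp at h
  | cons a l ih =>
    intro hs α hα
    have hal : ∀ y ∈ l, a < y := (List.pairwise_cons.mp hs).1
    have hsl : l.Pairwise (· < ·) := (List.pairwise_cons.mp hs).2
    by_cases hav : a < v
    · rw [List.filter_cons_of_pos (by simpa using hav)]
      cases α with
      | zero => simpa using hav
      | succ β =>
        simp only [List.getD_cons_succ, List.length_cons]
        rw [ih hsl (by simpa using hα)]
        omega
    · rw [List.filter_cons_of_neg (by simpa using hav)]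
      have hnil : l.filter (fun x => x < v) = [] := by
        rw [List.filter_eq_nil_iff]
        intro x hx
        simp only [decide_eq_true_eq]
        have := hal x hx
        omega
      rw [hnil]
      cases α with
      | zero => simpa using hav
      | succ β =>
        simp only [List.getD_cons_succ, List.length_nil]
        have hβ : β < l.length := by simpa using hα
        have : a < l.getD β 0 := by
          rw [List.getD_eq_getElem _ _ hβ]
          exact hal _ (List.getElem_mem hβ)
        omega

lemma filter_sort_length (s : Finset ℕ) (v : ℕ) :
    ((s.sort (· ≤ ·)).filter (fun x => x < v)).length = (s.filter (· < v)).card := by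
  have h1 : (s.sort (· ≤ ·)).Perm s.toList := Finset.sort_perm_toList s _
  rw [List.Perm.length_eq (List.Perm.filter _ h1)]
  rw [← Multiset.coe_card, ← Multiset.filter_coe (fun x => x < v)]
  simp [Finset.toList, Finset.filter_val]
  rfl

lemma nthElt_lt_iff {I : Finset ℕ} {p q : ℕ} {α : ℕ} (hα : α < I.card) :
    nthElt I α < p + q ↔ α < (I.filter (· < p + q)).card := by
  rw [← filter_sort_length]
  exact sorted_getD_lt_iff ((Finset.sortedLT_sort I).pairwise) (by rwa [Finset.length_sort])

lemma pureNum_eq_zero {n p q : ℕ} (hq1 : 1 ≤ q) (hqn : q ≤ n) {I : Finset ℕ}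
    (hcard : I.card = n - 1)
    (hbad : ¬((I.filter (· < p + q)).card = q - 1 ∧ p + q ∉ I)) :
    pureNum n p q I = 0 := by
  set t := (I.filter (· < p + q)).card with ht
  have htle : t ≤ n - 1 := hcard ▸ Finset.card_le_card (Finset.filter_subset _ _)
  rcases Nat.lt_trichotomy t (q - 1) with h | h | h
  · -- t < q - 1 : factor at index t vanishes
    apply Finset.prod_eq_zero (i := t) (Finset.mem_range.mpr (by omega))
    have hx : ¬ (nthElt I t < p + q) := by
      rw [nthElt_lt_iff (by omega)]; omega
    rw [if_pos (by omega)]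
    have : (p : ℤ) + q - nthElt I t ≤ 0 := by
      have : (p + q : ℕ) ≤ nthElt I t := by omega
      push_cast
      omega
    omega
  · -- t = q - 1 and p + q ∈ I
    have hmem : p + q ∈ I := by
      by_contra hn
      exact hbad ⟨h.symm ▸ rfl, hn⟩
    have htlt : t < I.card := by
      apply Finset.card_lt_card
      constructor
      · exact Finset.filter_subset _ _
      · intro hsub
        have := hsub hmem
        simp at this
    -- nthElt I t = p + q
    have hval : nthElt I t = p + q := by
      have hmemL : p + q ∈ I.sort (· ≤ ·) := (Finset.mem_sort _).mpr hmem
      obtain ⟨β, hβ, hβv⟩ := List.getElem_of_mem hmemL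
      have hβD : (I.sort (· ≤ ·)).getD β 0 = p + q := by
        rw [List.getD_eq_getElem _ _ hβ]; exact hβv
      have hβt : t ≤ β := by
        by_contra hc
        have : nthElt I β < p + q := by
          rw [nthElt_lt_iff (by rwa [← Finset.length_sort (α := ℕ) (· ≤ ·)])]
          omega
        rw [show nthElt I β = (I.sort (· ≤ ·)).getD β 0 from rfl, hβD] at this
        omega
      have h1 : (I.sort (· ≤ ·)).getD t 0 ≤ p + q := by
        rw [← hβD]
        exact sorted_getD_mono ((Finset.sortedLT_sort I).pairwise) hβt hβ
      have h2 : ¬ (nthElt I t < p + q) := by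
        rw [nthElt_lt_iff htlt]; omega
      have : nthElt I t = (I.sort (· ≤ ·)).getD t 0 := rfl
      omega
    apply Finset.prod_eq_zero (i := t) (Finset.mem_range.mpr (by omega))
    rw [if_neg (by omega), hval]
    push_cast
    omega
  · -- t > q - 1 : factor at index q-1 vanishes
    apply Finset.prod_eq_zero (i := q - 1) (Finset.mem_range.mpr (by omega))
    have hx : nthElt I (q - 1) < p + q := by
      rw [nthElt_lt_iff (by omega)]; omega
    rw [if_neg (by omega)]
    have : (nthElt I (q-1) : ℤ) - p - q ≤ 0 := by push_cast; omega
    omega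

lemma sort_union_eq {A B : Finset ℕ} (hd : Disjoint A B)
    (hAB : ∀ a ∈ A, ∀ b ∈ B, a ≤ b) :
    (A ∪ B).sort (· ≤ ·) = A.sort (· ≤ ·) ++ B.sort (· ≤ ·) := by
  apply List.Perm.eq_of_pairwise' (r := (· ≤ ·)) (Finset.pairwise_sort _ _)
  · rw [List.pairwise_append]
    refine ⟨Finset.pairwise_sort _ _, Finset.pairwise_sort _ _, ?_⟩
    intro a ha b hb
    exact hAB a ((Finset.mem_sort _).mp ha) b ((Finset.mem_sort _).mp hb)
  · rw [← Multiset.coe_eq_coe]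
    have h1 : (↑((A ∪ B).sort (· ≤ ·)) : Multiset ℕ) = (A ∪ B).val := Finset.sort_eq _ _
    have h2 : (↑(A.sort (· ≤ ·) ++ B.sort (· ≤ ·)) : Multiset ℕ) = A.val + B.val := by
      rw [← Multiset.coe_add]
      congr 1 <;> exact Finset.sort_eq _ _
    rw [h1, h2, ← Finset.disjUnion_eq_union A B hd]
    rfl


lemma getD_mem_of_lt {l : List ℕ} {α : ℕ} (h : α < l.length) : l.getD α 0 ∈ l := by
  rw [List.getD_eq_getElem _ _ h]
  exact List.getElem_mem h

lemma pureNum_good {n p q r : ℕ} (hq1 : 1 ≤ q) (hqn : q ≤ n) {A B : Finset ℕ}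
    (hA : A ∈ (Finset.Icc 1 (p+q-1)).powersetCard (q-1))
    (hB : B ∈ (Finset.Icc (p+q+1) r).powersetCard (n-q)) :
    pureNum n p q (A ∪ B) = (∏ a ∈ A, ((p:ℤ) + q - a)) * ∏ b ∈ B, ((b:ℤ) - p - q) := by
  rw [Finset.mem_powersetCard] at hA hB
  obtain ⟨hAsub, hAcard⟩ := hA
  obtain ⟨hBsub, hBcard⟩ := hB
  have hAmem : ∀ a ∈ A, 1 ≤ a ∧ a ≤ p + q - 1 := fun a ha => Finset.mem_Icc.mp (hAsub ha)
  have hBmem : ∀ b ∈ B, p + q + 1 ≤ b ∧ b ≤ r := fun b hb => Finset.mem_Icc.mp (hBsub hb)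
  have hd : Disjoint A B := by
    rw [Finset.disjoint_left]
    intro x hxA hxB
    have h1 := (hAmem x hxA).2
    have h2 := (hBmem x hxB).1
    omega
  have hsort := sort_union_eq hd (fun a ha b hb => by
    have h1 := (hAmem a ha).2; have h2 := (hBmem b hb).1; omega)
  set lA := A.sort (· ≤ ·) with hlAdef
  set lB := B.sort (· ≤ ·) with hlBdef
  have hlA : lA.length = q - 1 := by rw [hlAdef, Finset.length_sort]; exact hAcard
  have hlB : lB.length = n - q := by rw [hlBdef, Finset.length_sort]; exact hBcard
  have hsplit : n - 1 = (q - 1) + (n - q) := by omega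
  unfold pureNum nthElt
  rw [hsort, hsplit, Finset.prod_range_add]
  congr 1
  · have step : ∀ α ∈ Finset.range (q-1),
        (if α + 1 < q then max ((p : ℤ) + q - (lA ++ lB).getD α 0) 0
         else max (((lA ++ lB).getD α 0 : ℤ) - p - q) 0)
        = (p : ℤ) + q - lA.getD α 0 := by
      intro α hα
      have hα' : α < q - 1 := Finset.mem_range.mp hα
      rw [if_pos (by omega), List.getD_append _ _ _ _ (by omega)]
      have hmem : lA.getD α 0 ∈ A := (Finset.mem_sort _).mp (getD_mem_of_lt (by rw [hlA]; omega))
      have h1 := (hAmem _ hmem).1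
      have h2 := (hAmem _ hmem).2
      have : (1:ℤ) ≤ (p : ℤ) + q - lA.getD α 0 := by push_cast; omega
      omega
    rw [Finset.prod_congr rfl step, show (q-1) = lA.length from hlA.symm,
      list_prod_getD (fun y : ℕ => (p : ℤ) + q - y) lA,
      prod_sort_map A (fun y : ℕ => (p : ℤ) + q - y)]
  · have step : ∀ α ∈ Finset.range (n-q),
        (if (q-1) + α + 1 < q then max ((p : ℤ) + q - (lA ++ lB).getD ((q-1)+α) 0) 0
         else max (((lA ++ lB).getD ((q-1)+α) 0 : ℤ) - p - q) 0)
        = (lB.getD α 0 : ℤ) - p - q := by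
      intro α hα
      have hα' : α < n - q := Finset.mem_range.mp hα
      rw [if_neg (by omega), List.getD_append_right _ _ _ _ (by omega)]
      have hidx : (q-1) + α - lA.length = α := by omega
      rw [hidx]
      have hmem : lB.getD α 0 ∈ B := (Finset.mem_sort _).mp (getD_mem_of_lt (by rw [hlB]; omega))
      have h1 := (hBmem _ hmem).1
      have : (1:ℤ) ≤ (lB.getD α 0 : ℤ) - p - q := by push_cast; omega
      omega
    rw [Finset.prod_congr rfl step, show (n-q) = lB.length from hlB.symm,
      list_prod_getD (fun y : ℕ => (y : ℤ) - p - q) lB,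
      prod_sort_map B (fun y : ℕ => (y : ℤ) - p - q)]

lemma sigma_shift_down (w m : ℕ) :
    ∑ A ∈ (Finset.Icc 1 w).powersetCard m, ∏ a ∈ A, ((w:ℤ) + 1 - a)
      = (sigmaFn m w : ℤ) := by
  unfold sigmaFn
  push_cast
  have hmm : ∀ A : Finset ℕ, A ∈ (Finset.Icc 1 w).powersetCard m →
      (∀ a ∈ A, 1 ≤ a ∧ a ≤ w) ∧ A.card = m := by
    intro A hA
    rw [Finset.mem_powersetCard] at hA
    exact ⟨fun a ha => Finset.mem_Icc.mp (hA.1 ha), hA.2⟩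
  have hmemtgt : ∀ A : Finset ℕ, (∀ a ∈ A, 1 ≤ a ∧ a ≤ w) → A.card = m →
      A.image (fun a => w + 1 - a) ∈ (Finset.Icc 1 w).powersetCard m := by
    intro A hmem hcard
    rw [Finset.mem_powersetCard]
    constructor
    · intro x hx
      rw [Finset.mem_image] at hx
      obtain ⟨a, ha, rfl⟩ := hx
      have := hmem a ha
      rw [Finset.mem_Icc]; omega
    · rw [Finset.card_image_of_injOn, hcard]
      intro a ha b hb hab
      have hab' : w + 1 - a = w + 1 - b := hab
      have := hmem a ha; have := hmem b hb
      omega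
  have hinv : ∀ A : Finset ℕ, (∀ a ∈ A, 1 ≤ a ∧ a ≤ w) →
      (A.image (fun a => w + 1 - a)).image (fun a => w + 1 - a) = A := by
    intro A hmem
    ext x
    simp only [Finset.mem_image]
    constructor
    · rintro ⟨y, ⟨z, hz, rfl⟩, rfl⟩
      have := hmem z hz
      have : w + 1 - (w + 1 - z) = z := by omega
      rwa [this]
    · intro hx
      refine ⟨w + 1 - x, ⟨x, hx, rfl⟩, ?_⟩
      have := hmem x hx
      omega
  apply Finset.sum_nbij' (i := fun A => A.image (fun a => w + 1 - a))
    (j := fun A => A.image (fun a => w + 1 - a))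
  · intro A hA
    obtain ⟨hmem, hcard⟩ := hmm A hA
    exact hmemtgt A hmem hcard
  · intro A hA
    obtain ⟨hmem, hcard⟩ := hmm A hA
    exact hmemtgt A hmem hcard
  · intro A hA
    exact hinv A (hmm A hA).1
  · intro A hA
    exact hinv A (hmm A hA).1
  · intro A hA
    obtain ⟨hmem, hcard⟩ := hmm A hA
    rw [Finset.prod_image (by
      intro a ha b hb hab
      have hab' : w + 1 - a = w + 1 - b := hab
      have := hmem a ha; have := hmem b hb; omega)]
    apply Finset.prod_congr rfl
    intro a ha
    have := hmem a ha
    push_cast [Nat.cast_sub (by omega : a ≤ w + 1)]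
    ring

lemma sigma_shift_up (s r m : ℕ) :
    ∑ B ∈ (Finset.Icc (s+1) r).powersetCard m, ∏ b ∈ B, ((b:ℤ) - s)
      = (sigmaFn m (r - s) : ℤ) := by
  unfold sigmaFn
  push_cast
  apply Finset.sum_nbij' (i := fun B => B.image (fun b => b - s))
    (j := fun B => B.image (fun b => b + s))
  · intro B hB
    rw [Finset.mem_powersetCard] at hB ⊢
    obtain ⟨hsub, hcard⟩ := hB
    have hmem : ∀ b ∈ B, s + 1 ≤ b ∧ b ≤ r := fun b hb => Finset.mem_Icc.mp (hsub hb)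
    constructor
    · intro x hx
      rw [Finset.mem_image] at hx
      obtain ⟨b, hb, rfl⟩ := hx
      have := hmem b hb
      rw [Finset.mem_Icc]; omega
    · rw [Finset.card_image_of_injOn, hcard]
      intro a ha b hb hab
      have hab' : a - s = b - s := hab
      have := hmem a ha; have := hmem b hb
      omega
  · intro B hB
    rw [Finset.mem_powersetCard] at hB ⊢
    obtain ⟨hsub, hcard⟩ := hB
    have hmem : ∀ b ∈ B, 1 ≤ b ∧ b ≤ r - s := fun b hb => Finset.mem_Icc.mp (hsub hb)
    constructor
    · intro x hx
      rw [Finset.mem_image] at hx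
      obtain ⟨b, hb, rfl⟩ := hx
      have := hmem b hb
      rw [Finset.mem_Icc]; omega
    · rw [Finset.card_image_of_injOn, hcard]
      intro a ha b hb hab
      have hab' : a + s = b + s := hab
      omega
  · intro B hB
    rw [Finset.mem_powersetCard] at hB
    obtain ⟨hsub, hcard⟩ := hB
    have hmem : ∀ b ∈ B, s + 1 ≤ b ∧ b ≤ r := fun b hb => Finset.mem_Icc.mp (hsub hb)
    ext x
    simp only [Finset.mem_image]
    constructor
    · rintro ⟨y, ⟨z, hz, rfl⟩, rfl⟩
      have := hmem z hz
      have hzz : z - s + s = z := by omega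
      rwa [hzz]
    · intro hx
      refine ⟨x - s, ⟨x, hx, rfl⟩, ?_⟩
      have := hmem x hx
      omega
  · intro B hB
    rw [Finset.mem_powersetCard] at hB
    obtain ⟨hsub, hcard⟩ := hB
    ext x
    simp only [Finset.mem_image]
    constructor
    · rintro ⟨y, ⟨z, hz, rfl⟩, rfl⟩
      simpa using hz
    · intro hx
      exact ⟨x + s, ⟨x, hx, rfl⟩, by omega⟩
  · intro B hB
    rw [Finset.mem_powersetCard] at hB
    obtain ⟨hsub, hcard⟩ := hB
    have hmem : ∀ b ∈ B, s + 1 ≤ b ∧ b ≤ r := fun b hb => Finset.mem_Icc.mp (hsub hb)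
    rw [Finset.prod_image (by
      intro a ha b hb hab
      have hab' : a - s = b - s := hab
      have := hmem a ha; have := hmem b hb; omega)]
    apply Finset.prod_congr rfl
    intro b hb
    have := hmem b hb
    push_cast [Nat.cast_sub (by omega : s ≤ b)]
    ring

lemma sum_pureNum {n p q r : ℕ} (hq1 : 1 ≤ q) (hqn : q ≤ n) (hpq : p + q ≤ r) :
    ∑ I ∈ (Finset.Icc 1 r).powersetCard (n-1), pureNum n p q I
      = (sigmaFn (q-1) (p+q-1) : ℤ) * (sigmaFn (n-q) (r-p-q) : ℤ) := by
  classical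
  have hstep1 : ∑ I ∈ (Finset.Icc 1 r).powersetCard (n-1), pureNum n p q I
      = ∑ I ∈ ((Finset.Icc 1 r).powersetCard (n-1)).filter
          (fun I => (I.filter (· < p + q)).card = q - 1 ∧ p + q ∉ I), pureNum n p q I := by
    symm
    apply Finset.sum_filter_of_ne
    intro I hI hne
    by_contra hbad
    exact hne (pureNum_eq_zero hq1 hqn (Finset.mem_powersetCard.mp hI).2 hbad)
  rw [hstep1]
  have hsub2 : r - (p + q) = r - p - q := by omega
  rw [← sigma_shift_down (p+q-1) (q-1), ← hsub2, ← sigma_shift_up (p+q) r (n-q)]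
  rw [Finset.sum_mul_sum, ← Finset.sum_product']
  have hcast1 : ∀ a : ℕ, a ∈ Finset.Icc 1 (p+q-1) → ((p+q-1 : ℕ) : ℤ) + 1 - a = (p:ℤ) + q - a := by
    intro a ha
    have : 1 ≤ p + q := by omega
    push_cast [Nat.cast_sub this]
    ring
  apply Finset.sum_nbij'
    (i := fun I => (I.filter (· < p + q), I.filter (fun x => p + q < x)))
    (j := fun AB => AB.1 ∪ AB.2)
  · -- membership forward
    intro I hI
    rw [Finset.mem_filter] at hI
    obtain ⟨hIP, hgood⟩ := hI
    rw [Finset.mem_powersetCard] at hIP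
    obtain ⟨hIsub, hIcard⟩ := hIP
    have hImem : ∀ x ∈ I, 1 ≤ x ∧ x ≤ r := fun x hx => Finset.mem_Icc.mp (hIsub hx)
    have hBcard : (I.filter (fun x => p + q < x)).card = n - q := by
      have h1 := Finset.card_filter_add_card_filter_not (s := I) (p := (· < p + q))
      have h2 : I.filter (fun x => ¬ x < p + q) = I.filter (fun x => p + q < x) := by
        apply Finset.filter_congr
        intro x hx
        have : x ≠ p + q := fun h => hgood.2 (h ▸ hx)
        simp only [not_lt, eq_iff_iff]
        omega
      rw [h2] at h1
      have := hgood.1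
      omega
    rw [Finset.mem_product]
    constructor
    · rw [Finset.mem_powersetCard]
      refine ⟨?_, hgood.1⟩
      intro x hx
      rw [Finset.mem_filter] at hx
      have := hImem x hx.1
      rw [Finset.mem_Icc]
      omega
    · rw [Finset.mem_powersetCard]
      refine ⟨?_, hBcard⟩
      intro x hx
      rw [Finset.mem_filter] at hx
      have := hImem x hx.1
      rw [Finset.mem_Icc]
      omega
  · -- membership backward
    intro AB hAB
    rw [Finset.mem_product] at hAB
    obtain ⟨hA, hB⟩ := hAB
    rw [Finset.mem_powersetCard] at hA hB
    obtain ⟨hAsub, hAcard⟩ := hA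
    obtain ⟨hBsub, hBcard⟩ := hB
    have hAmem : ∀ a ∈ AB.1, 1 ≤ a ∧ a ≤ p + q - 1 := fun a ha => Finset.mem_Icc.mp (hAsub ha)
    have hBmem : ∀ b ∈ AB.2, p + q + 1 ≤ b ∧ b ≤ r := fun b hb => Finset.mem_Icc.mp (hBsub hb)
    have hd : Disjoint AB.1 AB.2 := by
      rw [Finset.disjoint_left]
      intro x h1 h2
      have := hAmem x h1; have := hBmem x h2; omega
    rw [Finset.mem_filter]
    refine ⟨?_, ?_, ?_⟩
    · rw [Finset.mem_powersetCard]
      constructor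
      · intro x hx
        rw [Finset.mem_union] at hx
        rw [Finset.mem_Icc]
        rcases hx with h | h
        · have := hAmem x h; omega
        · have := hBmem x h; omega
      · rw [Finset.card_union_of_disjoint hd, hAcard, hBcard]
        omega
    · have : (AB.1 ∪ AB.2).filter (· < p + q) = AB.1 := by
        rw [Finset.filter_union]
        rw [Finset.filter_true_of_mem (fun a ha => by have := hAmem a ha; omega)]
        rw [Finset.filter_false_of_mem (fun b hb => by have := hBmem b hb; omega)]
        exact Finset.union_empty _
      rw [this, hAcard]
    · intro hmem
      rw [Finset.mem_union] at hmem
      rcases hmem with h | h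
      · have := hAmem _ h; omega
      · have := hBmem _ h; omega
  · -- left inverse
    intro I hI
    rw [Finset.mem_filter] at hI
    obtain ⟨hIP, hgood⟩ := hI
    ext x
    simp only [Finset.mem_union, Finset.mem_filter]
    constructor
    · rintro (⟨h, _⟩ | ⟨h, _⟩) <;> exact h
    · intro hx
      have : x ≠ p + q := fun h => hgood.2 (h ▸ hx)
      rcases Nat.lt_or_ge x (p+q) with h | h
      · exact Or.inl ⟨hx, h⟩
      · exact Or.inr ⟨hx, by omega⟩
  · -- right inverse
    intro AB hAB
    rw [Finset.mem_product] at hAB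
    obtain ⟨hA, hB⟩ := hAB
    rw [Finset.mem_powersetCard] at hA hB
    have hAmem : ∀ a ∈ AB.1, 1 ≤ a ∧ a ≤ p + q - 1 := fun a ha => Finset.mem_Icc.mp (hA.1 ha)
    have hBmem : ∀ b ∈ AB.2, p + q + 1 ≤ b ∧ b ≤ r := fun b hb => Finset.mem_Icc.mp (hB.1 hb)
    have e1 : (AB.1 ∪ AB.2).filter (· < p + q) = AB.1 := by
      rw [Finset.filter_union]
      rw [Finset.filter_true_of_mem (fun a ha => by have := hAmem a ha; omega)]
      rw [Finset.filter_false_of_mem (fun b hb => by have := hBmem b hb; omega)]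
      exact Finset.union_empty _
    have e2 : (AB.1 ∪ AB.2).filter (fun x => p + q < x) = AB.2 := by
      rw [Finset.filter_union]
      rw [Finset.filter_false_of_mem (fun a ha => by have := hAmem a ha; omega)]
      rw [Finset.filter_true_of_mem (fun b hb => by have := hBmem b hb; omega)]
      exact Finset.empty_union _
    exact Prod.ext e1 e2
  · -- values
    intro I hI
    rw [Finset.mem_filter] at hI
    obtain ⟨hIP, hgood⟩ := hI
    rw [Finset.mem_powersetCard] at hIP
    obtain ⟨hIsub, hIcard⟩ := hIP
    have hImem : ∀ x ∈ I, 1 ≤ x ∧ x ≤ r := fun x hx => Finset.mem_Icc.mp (hIsub hx)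
    have hBcard : (I.filter (fun x => p + q < x)).card = n - q := by
      have h1 := Finset.card_filter_add_card_filter_not (s := I) (p := (· < p + q))
      have h2 : I.filter (fun x => ¬ x < p + q) = I.filter (fun x => p + q < x) := by
        apply Finset.filter_congr
        intro x hx
        have : x ≠ p + q := fun h => hgood.2 (h ▸ hx)
        simp only [not_lt, eq_iff_iff]
        omega
      rw [h2] at h1
      have := hgood.1
      omega
    have hAmem' : I.filter (· < p + q) ∈ (Finset.Icc 1 (p+q-1)).powersetCard (q-1) := by
      rw [Finset.mem_powersetCard]
      refine ⟨?_, hgood.1⟩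
      intro x hx
      rw [Finset.mem_filter] at hx
      have := hImem x hx.1
      rw [Finset.mem_Icc]; omega
    have hBmem' : I.filter (fun x => p + q < x) ∈ (Finset.Icc (p+q+1) r).powersetCard (n-q) := by
      rw [Finset.mem_powersetCard]
      refine ⟨?_, hBcard⟩
      intro x hx
      rw [Finset.mem_filter] at hx
      have := hImem x hx.1
      rw [Finset.mem_Icc]; omega
    have hIeq : I = (I.filter (· < p + q)) ∪ (I.filter (fun x => p + q < x)) := by
      ext x
      simp only [Finset.mem_union, Finset.mem_filter]
      constructor
      · intro hx
        have : x ≠ p + q := fun h => hgood.2 (h ▸ hx)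
        rcases Nat.lt_or_ge x (p+q) with h | h
        · exact Or.inl ⟨hx, h⟩
        · exact Or.inr ⟨hx, by omega⟩
      · rintro (⟨h, _⟩ | ⟨h, _⟩) <;> exact h
    calc pureNum n p q I
        = pureNum n p q ((I.filter (· < p + q)) ∪ (I.filter (fun x => p + q < x))) := by
          rw [← hIeq]
      _ = (∏ a ∈ I.filter (· < p + q), ((p:ℤ) + q - a)) *
            ∏ b ∈ I.filter (fun x => p + q < x), ((b:ℤ) - p - q) :=
          pureNum_good hq1 hqn hAmem' hBmem'
      _ = _ := by
          congr 1
          · apply Finset.prod_congr rfl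
            intro a ha
            rw [hcast1 a ((Finset.mem_powersetCard.mp hAmem').1 ha)]
          · apply Finset.prod_congr rfl
            intro b hb
            push_cast
            ring

lemma sigmaFn_zero (a : ℕ) : sigmaFn 0 a = 1 := by
  unfold sigmaFn
  simp

lemma sigmaFn_zero_succ (b : ℕ) : sigmaFn (b+1) 0 = 0 := by
  unfold sigmaFn
  rw [Finset.powersetCard_eq_empty.mpr (by simp)]
  simp

lemma sigmaFn_succ (b a : ℕ) :
    sigmaFn (b+1) (a+1) = sigmaFn (b+1) a + (a+1) * sigmaFn b a := by
  unfold sigmaFn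
  have h : Finset.Icc 1 (a+1) = insert (a+1) (Finset.Icc 1 a) := by
    ext x; simp only [Finset.mem_Icc, Finset.mem_insert]; omega
  have hnot : a + 1 ∉ Finset.Icc 1 a := by simp
  rw [h, Finset.powersetCard_succ_insert hnot]
  rw [Finset.sum_union]
  · congr 1
    rw [Finset.sum_image]
    · rw [Finset.mul_sum]
      apply Finset.sum_congr rfl
      intro J hJ
      rw [Finset.mem_powersetCard] at hJ
      have : a + 1 ∉ J := fun hc => hnot (hJ.1 hc)
      rw [Finset.prod_insert this]
    · intro J hJ K hK hJK
      rw [Finset.mem_coe, Finset.mem_powersetCard] at hJ hK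
      have hJ' : a + 1 ∉ J := fun hc => hnot (hJ.1 hc)
      have hK' : a + 1 ∉ K := fun hc => hnot (hK.1 hc)
      have := Finset.erase_insert hJ'
      rw [← Finset.erase_insert hJ', ← Finset.erase_insert hK', hJK]
  · rw [Finset.disjoint_left]
    intro J hJ hJ2
    rw [Finset.mem_powersetCard] at hJ
    rw [Finset.mem_image] at hJ2
    obtain ⟨K, hK, rfl⟩ := hJ2
    exact hnot (hJ.1 (Finset.mem_insert_self _ _))

lemma pow_add_le (x y : ℝ) (hx : 0 ≤ x) (hy : 0 ≤ y) :
    ∀ k : ℕ, x^(k+1) + (k+1) * y * x^k ≤ (x+y)^(k+1) := by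
  intro k
  induction k with
  | zero => simp
  | succ k ih =>
    have hxk : (0:ℝ) ≤ x^k := pow_nonneg hx k
    have hxk1 : (0:ℝ) ≤ x^(k+1) := pow_nonneg hx (k+1)
    have h1 : (x+y)^(k+1+1) = (x+y) * (x+y)^(k+1) := by ring
    have h2 : (x+y) * (x^(k+1) + (k+1) * y * x^k) ≤ (x+y) * (x+y)^(k+1) := by
      apply mul_le_mul_of_nonneg_left ih (by linarith)
    rw [h1]
    refine le_trans ?_ h2
    have e : (x+y) * (x^(k+1) + ((k:ℝ)+1)*y*x^k)
        = x^(k+1+1) + ((k:ℝ)+1+1)*y*x^(k+1) + ((k:ℝ)+1)*y^2*x^k := by ring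
    push_cast
    push_cast at e
    rw [e]
    nlinarith [mul_nonneg (mul_nonneg (by positivity : (0:ℝ) ≤ (k:ℝ)+1) (mul_self_nonneg y)) hxk]

lemma pow_sub_pow_le (u w : ℝ) (hu : 0 ≤ u) (huw : u ≤ w) :
    ∀ k : ℕ, w^(k+1) - u^(k+1) ≤ (k+1) * (w - u) * w^k := by
  intro k
  induction k with
  | zero => simp
  | succ k ih =>
    have hw : 0 ≤ w := le_trans hu huw
    have h1 : w^(k+1+1) - u^(k+1+1) = w * (w^(k+1) - u^(k+1)) + (w - u) * u^(k+1) := by ring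
    have h2 : w * (w^(k+1) - u^(k+1)) ≤ w * ((k+1) * (w - u) * w^k) :=
      mul_le_mul_of_nonneg_left ih hw
    have h3 : (w - u) * u^(k+1) ≤ (w - u) * w^(k+1) :=
      mul_le_mul_of_nonneg_left (pow_le_pow_left₀ hu huw (k+1)) (by linarith)
    rw [h1]
    have : w * ((k+1) * (w - u) * w^k) = (k+1) * (w-u) * w^(k+1) := by ring
    rw [this] at h2
    push_cast
    nlinarith

lemma sigma_ub : ∀ a b : ℕ, (b.factorial : ℝ) * sigmaFn b a ≤ ((a:ℝ)*(a+1)/2)^b := by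
  intro a
  induction a with
  | zero =>
    intro b
    cases b with
    | zero => simp [sigmaFn_zero]
    | succ b =>
      rw [sigmaFn_zero_succ]
      push_cast
      rw [mul_zero]
      positivity
  | succ a ih =>
    intro b
    cases b with
    | zero => simp [sigmaFn_zero]
    | succ b =>
      rw [sigmaFn_succ]
      have h1 := ih (b+1)
      have h2 := ih b
      have hT : (0:ℝ) ≤ (a:ℝ)*(a+1)/2 := by positivity
      have key := pow_add_le ((a:ℝ)*(a+1)/2) ((a:ℝ)+1) hT (by positivity) b
      have heq : ((a:ℝ)*(a+1)/2) + ((a:ℝ)+1) = ((a+1:ℕ):ℝ)*((a+1:ℕ)+1)/2 := by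
        push_cast; ring
      rw [heq] at key
      refine le_trans ?_ key
      have hfs : (((b+1).factorial : ℕ) : ℝ) = ((b:ℝ)+1) * (b.factorial : ℝ) := by
        rw [Nat.factorial_succ]; push_cast; ring
      have h3 : ((b:ℝ)+1) * ((a:ℝ)+1) * ((b.factorial:ℝ) * (sigmaFn b a : ℝ))
          ≤ ((b:ℝ)+1)*((a:ℝ)+1) * ((a:ℝ)*(a+1)/2)^b :=
        mul_le_mul_of_nonneg_left h2 (by positivity)
      push_cast
      push_cast at h1 h3 hfs
      rw [hfs]
      rw [hfs] at h1
      nlinarith [h1, h3]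

lemma sigma_lb : ∀ a b : ℕ, (max ((a:ℝ)*((a:ℝ)+1)/2 - (b:ℝ)*(a:ℝ)) 0)^b
    ≤ (b.factorial : ℝ) * (sigmaFn b a : ℝ) := by
  intro a
  induction a with
  | zero =>
    intro b
    cases b with
    | zero => simp [sigmaFn_zero]
    | succ b =>
      rw [sigmaFn_zero_succ]
      push_cast
      rw [show (0:ℝ)*(0+1)/2 - ((b:ℝ)+1)*0 = 0 by ring, max_self, zero_pow (Nat.succ_ne_zero b)]
      positivity
  | succ a ih =>
    intro b
    cases b with
    | zero => simp [sigmaFn_zero]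
    | succ b =>
      rw [sigmaFn_succ]
      push_cast
      by_cases hcase : ((a:ℝ)+1)*(((a:ℝ)+1)+1)/2 - ((b:ℝ)+1)*((a:ℝ)+1) ≤ 0
      · rw [max_eq_right hcase, zero_pow (Nat.succ_ne_zero b)]
        positivity
      · push_neg at hcase
        have ha2b : 2*b + 1 ≤ a := by
          by_contra h
          push_neg at h
          have hab : (a:ℝ) ≤ 2*(b:ℝ) := by exact_mod_cast Nat.lt_succ_iff.mp h
          nlinarith
        have hab : (2*(b:ℝ) + 1) ≤ (a:ℝ) := by exact_mod_cast ha2b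
        have hu0 : (0:ℝ) ≤ (a:ℝ)*((a:ℝ)+1)/2 - ((b:ℝ)+1)*(a:ℝ) := by nlinarith
        have hv0 : (0:ℝ) ≤ (a:ℝ)*((a:ℝ)+1)/2 - (b:ℝ)*(a:ℝ) := by nlinarith
        have IH1 := ih (b+1)
        have IH2 := ih b
        push_cast at IH1 IH2
        rw [max_eq_left hu0] at IH1
        rw [max_eq_left hv0] at IH2
        rw [max_eq_left (le_of_lt hcase)]
        set u : ℝ := (a:ℝ)*((a:ℝ)+1)/2 - ((b:ℝ)+1)*(a:ℝ) with hu
        set v : ℝ := (a:ℝ)*((a:ℝ)+1)/2 - (b:ℝ)*(a:ℝ) with hv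
        set w : ℝ := ((a:ℝ)+1)*(((a:ℝ)+1)+1)/2 - ((b:ℝ)+1)*((a:ℝ)+1) with hw
        have hwu : w = u + ((a:ℝ) - (b:ℝ)) := by rw [hw, hu]; ring
        have huw : u ≤ w := by rw [hwu]; nlinarith
        have hwv : w ≤ v := by rw [hwu, hv]; nlinarith
        have hkey := pow_sub_pow_le u w hu0 huw b
        have hwb : w^b ≤ v^b := pow_le_pow_left₀ (by linarith) hwv b
        have hfs : (((b+1).factorial : ℕ) : ℝ) = ((b:ℝ)+1) * (b.factorial : ℝ) := by
          rw [Nat.factorial_succ]; push_cast; ring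
        push_cast at hfs
        rw [hfs]
        have h3 : ((b:ℝ)+1) * ((a:ℝ)+1) * v^b
            ≤ ((b:ℝ)+1)*((a:ℝ)+1) * ((b.factorial:ℝ) * (sigmaFn b a : ℝ)) :=
          mul_le_mul_of_nonneg_left IH2 (by positivity)
        have h4 : ((b:ℝ)+1) * ((a:ℝ) - (b:ℝ)) * w^b ≤ ((b:ℝ)+1) * ((a:ℝ)+1) * v^b := by
          apply mul_le_mul (by nlinarith) hwb (by positivity) (by positivity)
        rw [hfs] at IH1
        push_cast at hkey
        rw [show w - u = (a:ℝ) - (b:ℝ) from by rw [hwu]; ring] at hkey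
        have hrhs : ((b:ℝ)+1)*(b.factorial:ℝ)*((sigmaFn (b+1) a : ℝ) + ((a:ℝ)+1)*(sigmaFn b a : ℝ))
            = ((b:ℝ)+1)*(b.factorial:ℝ)*(sigmaFn (b+1) a : ℝ)
              + ((b:ℝ)+1)*((a:ℝ)+1)*((b.factorial:ℝ)*(sigmaFn b a : ℝ)) := by ring
        rw [hrhs]
        linarith [hkey, h4, h3, IH1]

lemma fact_ratio_lb (m : ℕ) : ∀ b : ℕ, m^b * m.factorial ≤ (m+b).factorial := by
  intro b
  induction b with
  | zero => simp
  | succ b ih =>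
    have h1 : m^(b+1) * m.factorial = m * (m^b * m.factorial) := by ring
    have h2 : (m + (b+1)).factorial = (m+b+1) * (m+b).factorial := by
      rw [show m + (b+1) = (m+b)+1 by ring, Nat.factorial_succ]
    rw [h1, h2]
    exact Nat.mul_le_mul (by omega) ih

lemma fact_ratio_ub (m : ℕ) : ∀ b : ℕ, (m+b).factorial ≤ (m+b)^b * m.factorial := by
  intro b
  induction b with
  | zero => simp
  | succ b ih =>
    have h2 : (m + (b+1)).factorial = (m+b+1) * (m+b).factorial := by
      rw [show m + (b+1) = (m+b)+1 by ring, Nat.factorial_succ]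
    rw [h2]
    calc (m+b+1) * (m+b).factorial ≤ (m+b+1) * ((m+b)^b * m.factorial) :=
          Nat.mul_le_mul_left _ ih
      _ ≤ (m+b+1) * ((m+b+1)^b * m.factorial) := by
          exact Nat.mul_le_mul_left _ (Nat.mul_le_mul_right _ (Nat.pow_le_pow_left (by omega) b))
      _ = (m+(b+1))^(b+1) * m.factorial := by
          rw [show m+(b+1) = m+b+1 by ring, pow_succ]
          ring

lemma bracket_bounds {n b m : ℕ} (hb : b ≤ n) {M : ℝ} (hM : 2*(n:ℝ)+2 ≤ M) (hm : M ≤ (m:ℝ)) :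
    (1 - (n:ℝ)/M)^n
      ≤ 2^b * ((b.factorial : ℝ) * (sigmaFn b (m+b) : ℝ) * (m.factorial : ℝ))
          / (((m+b).factorial : ℝ) * (m:ℝ)^b)
    ∧ 2^b * ((b.factorial : ℝ) * (sigmaFn b (m+b) : ℝ) * (m.factorial : ℝ))
          / (((m+b).factorial : ℝ) * (m:ℝ)^b)
      ≤ (1 + ((n:ℝ)+1)/M)^(2*n) := by
  have hn0 : (0:ℝ) ≤ n := Nat.cast_nonneg n
  have hbn : (b:ℝ) ≤ n := Nat.cast_le.mpr hb
  have hb0 : (0:ℝ) ≤ b := Nat.cast_nonneg b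
  have hM0 : (0:ℝ) < M := by linarith
  have hm0 : (0:ℝ) < m := lt_of_lt_of_le hM0 hm
  have hbm : (b:ℝ) + 1 < m := by linarith
  have hfm : (0:ℝ) < (m.factorial:ℝ) := by exact_mod_cast Nat.factorial_pos m
  have hfmb : (0:ℝ) < ((m+b).factorial:ℝ) := by exact_mod_cast Nat.factorial_pos (m+b)
  have hY : (0:ℝ) < ((m+b).factorial:ℝ) * (m:ℝ)^b := by positivity
  have hfr_lb : (m:ℝ)^b * (m.factorial:ℝ) ≤ ((m+b).factorial:ℝ) := by
    exact_mod_cast fact_ratio_lb m b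
  have hfr_ub : ((m+b).factorial:ℝ) ≤ ((m:ℝ)+b)^b * (m.factorial:ℝ) := by
    have h' : (((m+b).factorial : ℕ):ℝ) ≤ (((m+b)^b * m.factorial : ℕ):ℝ) :=
      Nat.cast_le.mpr (fact_ratio_ub m b)
    push_cast at h'
    exact h'
  have hσu : (b.factorial : ℝ) * (sigmaFn b (m+b) : ℝ)
      ≤ (((m:ℝ)+b)*(((m:ℝ)+b)+1)/2)^b := by
    have h := sigma_ub (m+b) b
    push_cast at h
    exact h
  have hσl : (((m:ℝ)+b)*((m:ℝ)-b+1)/2)^b ≤ (b.factorial : ℝ) * (sigmaFn b (m+b) : ℝ) := by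
    have h := sigma_lb (m+b) b
    push_cast at h
    have harg : ((m:ℝ)+b)*(((m:ℝ)+b)+1)/2 - (b:ℝ)*((m:ℝ)+b) = ((m:ℝ)+b)*((m:ℝ)-b+1)/2 := by
      ring
    rw [harg] at h
    rw [max_eq_left (by nlinarith)] at h
    exact h
  constructor
  · -- lower bound
    rw [le_div_iff₀ hY]
    have hx0 : (0:ℝ) < 1 - (n:ℝ)/M := by
      rw [sub_pos, div_lt_one hM0]; linarith
    have hx1 : (1:ℝ) - (n:ℝ)/M ≤ 1 := by
      have : (0:ℝ) ≤ (n:ℝ)/M := by positivity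
      linarith
    have hineq1 : 1 - (n:ℝ)/M ≤ ((m:ℝ) - b + 1)/m := by
      have e : ((m:ℝ) - b + 1)/m = 1 - ((b:ℝ) - 1)/m := by field_simp; ring
      rw [e, sub_le_sub_iff_left, div_le_div_iff₀ hm0 hM0]
      nlinarith
    have hstep1 : (1 - (n:ℝ)/M)^n ≤ (((m:ℝ) - b + 1)/m)^b :=
      le_trans (pow_le_pow_of_le_one hx0.le hx1 hb) (pow_le_pow_left₀ hx0.le hineq1 b)
    calc (1 - (n:ℝ)/M)^n * (((m+b).factorial:ℝ) * (m:ℝ)^b)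
        ≤ (((m:ℝ) - b + 1)/m)^b * (((m+b).factorial:ℝ) * (m:ℝ)^b) := by
          apply mul_le_mul_of_nonneg_right hstep1 (by positivity)
      _ ≤ (((m:ℝ) - b + 1)/m)^b * ((((m:ℝ)+b)^b * (m.factorial:ℝ)) * (m:ℝ)^b) := by
          apply mul_le_mul_of_nonneg_left _
            (le_of_lt (pow_pos (div_pos (by linarith) hm0) b))
          apply mul_le_mul_of_nonneg_right hfr_ub (by positivity)
      _ = (2:ℝ)^b * ((((m:ℝ)+b)*((m:ℝ)-b+1)/2)^b) * (m.factorial:ℝ) := by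
          have ebase : ((2:ℝ) * (((m:ℝ)+b)*((m:ℝ)-b+1)/2)) = ((m:ℝ) - b + 1) * ((m:ℝ)+b) := by
            ring
          have e1 : (2:ℝ)^b * ((((m:ℝ)+b)*((m:ℝ)-b+1)/2)^b)
              = (((m:ℝ) - b + 1) * ((m:ℝ)+b))^b := by
            rw [← mul_pow, ebase]
          have e2 : (((m:ℝ) - b + 1)/m)^b * ((((m:ℝ)+b)^b * (m.factorial:ℝ)) * (m:ℝ)^b)
              = (((m:ℝ) - b + 1) * ((m:ℝ)+b))^b * (m.factorial:ℝ) := by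
            rw [mul_pow, div_pow]
            field_simp
          rw [e2, e1]
      _ ≤ (2:ℝ)^b * ((b.factorial : ℝ) * (sigmaFn b (m+b) : ℝ)) * (m.factorial:ℝ) := by
          apply mul_le_mul_of_nonneg_right _ hfm.le
          exact mul_le_mul_of_nonneg_left hσl (by positivity)
      _ = 2^b * ((b.factorial : ℝ) * (sigmaFn b (m+b) : ℝ) * (m.factorial : ℝ)) := by ring
  · -- upper bound
    rw [div_le_iff₀ hY]
    have hbase1 : (1:ℝ) ≤ 1 + ((n:ℝ)+1)/M := le_add_of_nonneg_right (by positivity)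
    have hineq2 : (m:ℝ) + b + 1 ≤ (1 + ((n:ℝ)+1)/M) * m := by
      have e : (1 + ((n:ℝ)+1)/M) * m = m + ((n:ℝ)+1)*m/M := by ring
      rw [e]
      have h1 : ((b:ℝ)+1) * M ≤ ((n:ℝ)+1)*m := by nlinarith
      have h2 : (b:ℝ) + 1 ≤ ((n:ℝ)+1)*m/M := by
        rw [le_div_iff₀ hM0]
        exact h1
      linarith
    calc 2^b * ((b.factorial : ℝ) * (sigmaFn b (m+b) : ℝ) * (m.factorial : ℝ))
        ≤ 2^b * ((((m:ℝ)+b)*(((m:ℝ)+b)+1)/2)^b * (m.factorial : ℝ)) := by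
          apply mul_le_mul_of_nonneg_left _ (by positivity)
          exact mul_le_mul_of_nonneg_right hσu hfm.le
      _ = (((m:ℝ)+b)*((m:ℝ)+b+1))^b * (m.factorial : ℝ) := by
          rw [← mul_assoc, ← mul_pow]
          congr 2
          ring
      _ ≤ (((m:ℝ)+b+1)*((m:ℝ)+b+1))^b * (m.factorial : ℝ) := by
          apply mul_le_mul_of_nonneg_right _ hfm.le
          apply pow_le_pow_left₀ (by positivity) (by nlinarith) b
      _ ≤ ((1 + ((n:ℝ)+1)/M) * m * ((1 + ((n:ℝ)+1)/M) * m))^b * (m.factorial : ℝ) := by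
          apply mul_le_mul_of_nonneg_right _ hfm.le
          apply pow_le_pow_left₀ (by positivity) _ b
          have h0 : (0:ℝ) ≤ (m:ℝ) + b + 1 := by positivity
          exact mul_le_mul hineq2 hineq2 h0 (by positivity)
      _ = (1 + ((n:ℝ)+1)/M)^(2*b) * ((m:ℝ)^b * (m:ℝ)^b) * (m.factorial : ℝ) := by
          rw [show (1 + ((n:ℝ)+1)/M) * m * ((1 + ((n:ℝ)+1)/M) * m)
              = ((1 + ((n:ℝ)+1)/M) * (1 + ((n:ℝ)+1)/M)) * ((m:ℝ) * m) from by ring,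
            mul_pow, mul_pow, mul_pow, ← pow_add, show b + b = 2*b from by ring]
      _ ≤ (1 + ((n:ℝ)+1)/M)^(2*n) * ((m:ℝ)^b * (m:ℝ)^b) * (m.factorial : ℝ) := by
          apply mul_le_mul_of_nonneg_right _ hfm.le
          apply mul_le_mul_of_nonneg_right _ (by positivity)
          exact pow_le_pow_right₀ hbase1 (by omega)
      _ ≤ (1 + ((n:ℝ)+1)/M)^(2*n) * (((m+b).factorial:ℝ) * (m:ℝ)^b) := by
          rw [mul_assoc]
          apply mul_le_mul_of_nonneg_left _ (by positivity)
          calc (m:ℝ)^b * (m:ℝ)^b * (m.factorial : ℝ)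
              = (m:ℝ)^b * ((m:ℝ)^b * (m.factorial : ℝ)) := by ring
            _ ≤ (m:ℝ)^b * ((m+b).factorial:ℝ) :=
                mul_le_mul_of_nonneg_left hfr_lb (by positivity)
            _ = ((m+b).factorial:ℝ) * (m:ℝ)^b := by ring


lemma key_identity (a b c d e f g s1 s2 P1 P2 t1 t2 : ℝ)
    (ha : a ≠ 0) (hb : b ≠ 0) (hc : c ≠ 0) (hd : d ≠ 0) (he : e ≠ 0)
    (hf : f ≠ 0) (hg : g ≠ 0) (hP1 : P1 ≠ 0) (hP2 : P2 ≠ 0)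
    (ht1 : t1 ≠ 0) (ht2 : t2 ≠ 0) :
    (1/2 * (a / (b * c) * (s1 * s2))) /
        ((a / (d * e)) * (1 / (2*(t1*t2)) * (P1 * P2) / (f * g)))
      = (t1 * (f * s1 * d) / (b * P1)) * (t2 * (g * s2 * e) / (c * P2)) := by
  field_simp

set_option maxHeartbeats 2000000 in
theorem stmt5 (n q : ℕ) (hn : 2 ≤ n) (hq1 : 1 ≤ q) (hqn : q ≤ n)
    (c : ℝ) (hc0 : 0 < c) (hc : c < 1 / 2) :
    ∀ ε : ℝ, 0 < ε → ∃ R : ℕ, ∀ r : ℕ, R ≤ r → ∀ p : ℕ,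
      c * r ≤ (p : ℝ) → (p : ℝ) ≤ (1 - c) * r →
      |((1 / 2 : ℝ) * ∑ I ∈ (Finset.Icc 1 r).powersetCard (n - 1), kPure n r p q I) /
          (((r - n).choose p : ℝ) * muFn n q r p) - 1| < ε := by
  intro ε hε
  set D : ℝ := 4*(n:ℝ)*((n:ℝ)+1)*2^(4*n) with hD
  have hD0 : (0:ℝ) < D := by positivity
  set X : ℝ := 4*(n:ℝ) + 4 + 2*(q:ℝ) + 2*D/ε + 2 with hX
  have hX0 : (0:ℝ) < X := by
    have h1 : (0:ℝ) < 2*D/ε := div_pos (by linarith) hε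
    have h2 : (0:ℝ) ≤ (n:ℝ) := Nat.cast_nonneg n
    have h3 : (0:ℝ) ≤ (q:ℝ) := Nat.cast_nonneg q
    rw [hX]; linarith
  refine ⟨⌈X/c⌉₊ + 1, ?_⟩
  intro r hr p hp1 hp2
  -- basic facts about r
  have hrR : (X/c : ℝ) ≤ (r:ℝ) := by
    calc (X/c : ℝ) ≤ (⌈X/c⌉₊ : ℝ) := Nat.le_ceil _
      _ ≤ ((⌈X/c⌉₊ + 1 : ℕ) : ℝ) := by push_cast; linarith
      _ ≤ (r:ℝ) := Nat.cast_le.mpr hr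
  have hXcr : X ≤ c * r := by
    rw [div_le_iff₀ hc0] at hrR
    linarith [hrR]
  have hn0 : (0:ℝ) ≤ (n:ℝ) := Nat.cast_nonneg n
  have hq0 : (0:ℝ) ≤ (q:ℝ) := Nat.cast_nonneg q
  have hqn' : (q:ℝ) ≤ (n:ℝ) := Nat.cast_le.mpr hqn
  have hcr0 : (0:ℝ) < c * r := lt_of_lt_of_le hX0 hXcr
  have hr0 : (0:ℝ) < (r:ℝ) := by nlinarith
  have hDcr : 2*D/ε + 2 ≤ c*r := by
    rw [hX] at hXcr
    linarith
  -- natural number inequalities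
  have hpn_r : p + n ≤ r := by
    have h1 : (p:ℝ) + n ≤ (r:ℝ) := by
      have : 4*(n:ℝ) + 4 ≤ c*r := by rw [hX] at hXcr; linarith [div_pos (by linarith : (0:ℝ) < 2*D) hε]
      nlinarith
    exact_mod_cast h1
  have hpq_r : p + q ≤ r := by
    have h1 : (p:ℝ) + q ≤ (r:ℝ) := by
      have : 2*(q:ℝ) ≤ c*r := by rw [hX] at hXcr; linarith [div_pos (by linarith : (0:ℝ) < 2*D) hε]
      nlinarith
    exact_mod_cast h1
  have hp_rn : p ≤ r - n := by omega
  have hp1' : 1 ≤ p := by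
    have : (0:ℝ) < (p:ℝ) := lt_of_lt_of_le hcr0 hp1
    exact_mod_cast Nat.one_le_iff_ne_zero.mpr (by exact_mod_cast this.ne')
  set b1 := q - 1 with hb1
  set b2 := n - q with hb2
  set m2 := r - p - n with hm2def
  have hm2cast : ((m2 : ℕ) : ℝ) = (r:ℝ) - p - n := by
    rw [hm2def]
    have h1 : p ≤ r := by omega
    have h2 : n ≤ r - p := by omega
    push_cast [Nat.cast_sub h2, Nat.cast_sub h1]
    ring
  set M : ℝ := c * r / 2 with hM
  have hMn : 2*(n:ℝ) + 2 ≤ M := by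
    rw [hM]
    have : 4*(n:ℝ) + 4 ≤ c*r := by rw [hX] at hXcr; linarith [div_pos (by linarith : (0:ℝ) < 2*D) hε]
    linarith
  have hM0 : (0:ℝ) < M := by linarith
  have hMm1 : M ≤ (p:ℝ) := by rw [hM]; linarith
  have hcr4n : 4*(n:ℝ) + 4 ≤ c*r := by
    rw [hX] at hXcr
    linarith [div_pos (by linarith : (0:ℝ) < 2*D) hε]
  have hMm2 : M ≤ (m2:ℝ) := by
    rw [hm2cast, hM]
    linarith
  -- index identities
  have ha1 : p + q - 1 = p + b1 := by omega
  have ha2 : r - p - q = m2 + b2 := by omega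
  have hrnp : r - n - p = m2 := by omega
  -- bracket bounds
  obtain ⟨hL1, hU1⟩ := bracket_bounds (show b1 ≤ n by omega) hMn hMm1
  obtain ⟨hL2, hU2⟩ := bracket_bounds (show b2 ≤ n by omega) hMn hMm2
  -- main algebraic identity
  have hfact_pos : ∀ k : ℕ, (0:ℝ) < (k.factorial : ℝ) := fun k => by
    exact_mod_cast Nat.factorial_pos k
  have hppos : (0:ℝ) < (p:ℝ) := lt_of_lt_of_le hM0 hMm1
  have hm2pos : (0:ℝ) < (m2:ℝ) := lt_of_lt_of_le hM0 hMm2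
  have hZ := sum_pureNum (n := n) (p := p) (q := q) (r := r) hq1 hqn hpq_r
  have hR : ∑ I ∈ (Finset.Icc 1 r).powersetCard (n - 1), ((pureNum n p q I : ℤ) : ℝ)
      = (sigmaFn b1 (p + b1) : ℝ) * (sigmaFn b2 (m2 + b2) : ℝ) := by
    rw [← ha1, ← ha2]
    exact_mod_cast hZ
  have hpow2 : (2:ℝ)^n = 2 * (2^b1 * 2^b2) := by
    rw [show n = b1 + b2 + 1 by omega, pow_succ, pow_add]
    ring
  have hEq : ((1 / 2 : ℝ) * ∑ I ∈ (Finset.Icc 1 r).powersetCard (n - 1), kPure n r p q I) /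
        (((r - n).choose p : ℝ) * muFn n q r p)
      = (2^b1 * ((b1.factorial : ℝ) * (sigmaFn b1 (p+b1) : ℝ) * (p.factorial : ℝ))
          / (((p+b1).factorial : ℝ) * (p:ℝ)^b1))
        * (2^b2 * ((b2.factorial : ℝ) * (sigmaFn b2 (m2+b2) : ℝ) * (m2.factorial : ℝ))
          / (((m2+b2).factorial : ℝ) * (m2:ℝ)^b2)) := by
    have hf1 : ((p+b1).factorial : ℝ) ≠ 0 := (hfact_pos _).ne'
    have hf2 : ((m2+b2).factorial : ℝ) ≠ 0 := (hfact_pos _).ne'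
    have hf3 : (((r-n).factorial : ℕ) : ℝ) ≠ 0 := (hfact_pos _).ne'
    have hf4 : ((p.factorial : ℕ) : ℝ) ≠ 0 := (hfact_pos _).ne'
    have hf5 : ((m2.factorial : ℕ) : ℝ) ≠ 0 := (hfact_pos _).ne'
    have hf6 : ((b1.factorial : ℕ) : ℝ) ≠ 0 := (hfact_pos _).ne'
    have hf7 : ((b2.factorial : ℕ) : ℝ) ≠ 0 := (hfact_pos _).ne'
    have hppow : (p:ℝ)^b1 ≠ 0 := pow_ne_zero _ hppos.ne'
    have hm2pow : (m2:ℝ)^b2 ≠ 0 := pow_ne_zero _ hm2pos.ne'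
    unfold kPure muFn
    rw [Nat.cast_choose ℝ hp_rn, hrnp]
    have hsum : ∑ I ∈ (Finset.Icc 1 r).powersetCard (n - 1),
        ((r - n).factorial : ℝ) * (pureNum n p q I : ℝ) /
          (((p + q - 1).factorial : ℝ) * ((r - p - q).factorial : ℝ))
      = ((r - n).factorial : ℝ) / (((p + q - 1).factorial : ℝ) * ((r - p - q).factorial : ℝ))
        * ((sigmaFn b1 (p + b1) : ℝ) * (sigmaFn b2 (m2 + b2) : ℝ)) := by
      rw [← hR, Finset.mul_sum]
      apply Finset.sum_congr rfl
      intro I _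
      ring
    rw [hsum, ha1, ha2, ← hb1, ← hb2, hpow2]
    rw [show ((r:ℝ) - ↑p - ↑n) = (m2:ℝ) from hm2cast.symm]
    exact key_identity _ _ _ _ _ _ _ _ _ _ _ _ _ hf3 hf1 hf2 hf4 hf5 hf6 hf7 hppow hm2pow
      (by positivity) (by positivity)
  rw [hEq]
  clear hEq hR hZ
  -- final bounds
  have hnM : (n:ℝ)/M ≤ 1 := by
    rw [div_le_one hM0]; linarith
  have hx0 : (0:ℝ) ≤ 1 - (n:ℝ)/M := by linarith
  have hLnn : (0:ℝ) ≤ (1 - (n:ℝ)/M)^n := pow_nonneg hx0 n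
  have hUnn : (0:ℝ) ≤ (1 + ((n:ℝ)+1)/M)^(2*n) := by positivity
  have hF1nn : (0:ℝ) ≤ 2^b1 * ((b1.factorial : ℝ) * (sigmaFn b1 (p+b1) : ℝ) * (p.factorial : ℝ))
      / (((p+b1).factorial : ℝ) * (p:ℝ)^b1) := le_trans hLnn hL1
  have hF2nn : (0:ℝ) ≤ 2^b2 * ((b2.factorial : ℝ) * (sigmaFn b2 (m2+b2) : ℝ) * (m2.factorial : ℝ))
      / (((m2+b2).factorial : ℝ) * (m2:ℝ)^b2) := le_trans hLnn hL2
  have hprod_lb := mul_le_mul hL1 hL2 hLnn hF1nn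
  have hprod_ub := mul_le_mul hU1 hU2 hF2nn hUnn
  rw [← pow_add, show n + n = 2*n from by ring] at hprod_lb
  rw [← pow_add, show 2*n + 2*n = 4*n from by ring] at hprod_ub
  -- Bernoulli lower bound
  have hber : 1 - 2*(n:ℝ)*((n:ℝ)/M) ≤ (1 - (n:ℝ)/M)^(2*n) := by
    have h := one_add_mul_le_pow (a := -((n:ℝ)/M)) (by linarith : (-2:ℝ) ≤ -((n:ℝ)/M)) (2*n)
    have e : (1 + -((n:ℝ)/M)) = 1 - (n:ℝ)/M := by ring
    rw [e] at h
    push_cast at h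
    linarith
  -- upper bound expansion
  set u : ℝ := ((n:ℝ)+1)/M with hu
  have hu0 : (0:ℝ) ≤ u := by positivity
  have hu1 : u ≤ 1 := by
    rw [hu, div_le_one hM0]; linarith
  have h2pow : (1:ℝ) ≤ 2^(4*n) := by
    calc (1:ℝ) = 2^0 := by norm_num
      _ ≤ 2^(4*n) := pow_le_pow_right₀ (by norm_num) (Nat.zero_le _)
  have hupp : (1+u)^(4*n) ≤ 1 + 4*(n:ℝ)*u*2^(4*n) := by
    have h4n : 4*n - 1 + 1 = 4*n := by omega
    have h := pow_sub_pow_le 1 (1+u) zero_le_one (by linarith) (4*n-1)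
    rw [h4n] at h
    have hc1 : ((4*n-1 : ℕ):ℝ) = 4*(n:ℝ) - 1 := by
      push_cast [Nat.cast_sub (by omega : 1 ≤ 4*n)]
      ring
    have hpow1 : (1+u)^(4*n-1) ≤ 2^(4*n) := by
      calc (1+u)^(4*n-1) ≤ 2^(4*n-1) := pow_le_pow_left₀ (by linarith) (by linarith) _
        _ ≤ 2^(4*n) := pow_le_pow_right₀ (by norm_num) (by omega)
    have h1 : ((4*n-1 : ℕ):ℝ) + 1 = 4*(n:ℝ) := by rw [hc1]; ring
    push_cast at h
    -- h : (1+u)^(4*n) - 1^(4*n) ≤ (↑(4*n-1)+1) * ((1+u) - 1) * (1+u)^(4*n-1)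
    have h2 : (1+u)^(4*n) - 1 ≤ 4*(n:ℝ) * u * (1+u)^(4*n-1) := by
      rw [one_pow] at h
      calc (1+u)^(4*n) - 1 ≤ (((4*n-1 : ℕ):ℝ)+1) * ((1+u) - 1) * (1+u)^(4*n-1) := by
            push_cast
            push_cast at h
            linarith
        _ = 4*(n:ℝ) * u * (1+u)^(4*n-1) := by rw [h1]; ring
    have h3 : 4*(n:ℝ) * u * (1+u)^(4*n-1) ≤ 4*(n:ℝ) * u * 2^(4*n) := by
      apply mul_le_mul_of_nonneg_left hpow1 (by positivity)
    linarith
  have hDMeq : 4*(n:ℝ)*u*2^(4*n) = D/M := by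
    rw [hu, hD]
    field_simp
  have hDM : D/M < ε := by
    have h1 : 2*D/ε < c*r := by linarith
    have h2 : 2*D < ε*(c*r) := by
      rw [div_lt_iff₀ hε] at h1
      linarith [h1]
    rw [div_lt_iff₀ hM0, hM]
    linarith
  have h2nD : 2*(n:ℝ)*(n:ℝ) ≤ D := by
    rw [hD]
    nlinarith [h2pow, hn0]
  have hlow : 1 - D/M ≤ 1 - 2*(n:ℝ)*((n:ℝ)/M) := by
    have e : 2*(n:ℝ)*((n:ℝ)/M) = (2*(n:ℝ)*(n:ℝ))/M := by ring
    have h := (div_le_div_iff_of_pos_right hM0).mpr h2nD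
    rw [e]
    linarith
  rw [abs_lt]
  constructor
  · have := le_trans hlow (le_trans hber hprod_lb)
    linarith
  · have := le_trans hprod_ub hupp
    rw [hDMeq] at this
    linarith
end
end
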